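/- Let A and B be irreducible non-permutation {0,1}-matrices, and let (X_A, σ_A) and (X_B, σ_B) be continuously orbit equivalent via a homeomorphism h: X_A → X_B with continuous functions k_1, l_1: X_A → ℤ_{≥0} and k_2, l_2: X_B → ℤ_{≥0}. If the cocycle function c_1 = l_1 − k_1 is a constant function with value C_1, then c_2 = l_2 − k_2 is also a constant function, with value C_2, and C_1 · C_2 = 1. -/

import Mathlib

/-- The group structure on self-homeomorphisms, with `(f * g) x = f (g x)`. -/
instance homeoGroup {X : Type*} [TopologicalSpace X] : Group (X ≃ₜ X) where
  mul f g := g.trans f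
  one := Homeomorph.refl X
  inv := Homeomorph.symm
  mul_assoc _ _ _ := Homeomorph.ext fun _ => rfl
  one_mul _ := Homeomorph.ext fun _ => rfl
  mul_one _ := Homeomorph.ext fun _ => rfl
  inv_mul_cancel f := Homeomorph.ext f.symm_apply_apply

private lemma iter_swap {α : Type*} (f : α → α) (a b : ℕ) (x : α) :
    f^[a] (f^[b] x) = f^[b] (f^[a] x) := by
  rw [← Function.iterate_add_apply, ← Function.iterate_add_apply, add_comm]

/-- The one-sided topological Markov shift space `X_A` of a 0-1 matrix `A`. -/
def MarkovShift {N : ℕ} (A : Matrix (Fin N) (Fin N) ℕ) : Set (ℕ → Fin N) :=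
  {x | ∀ n, A (x n) (x (n + 1)) = 1}

/-- The shift transformation `σ_A` on `X_A`. -/
def shift {N : ℕ} (A : Matrix (Fin N) (Fin N) ℕ) :
    ↥(MarkovShift A) → ↥(MarkovShift A) :=
  fun x => ⟨fun n => x.1 (n + 1), fun n => x.2 (n + 1)⟩

/-- `A` is a {0,1}-matrix which is irreducible and not a permutation matrix. -/
structure IsIrredNonPerm {N : ℕ} (A : Matrix (Fin N) (Fin N) ℕ) : Prop where
  zero_one : ∀ i j, A i j = 0 ∨ A i j = 1
  irreducible : ∀ i j, ∃ n, 1 ≤ n ∧ 0 < (A ^ n) i j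
  not_perm : ¬ ∃ e : Equiv.Perm (Fin N), ∀ i j, A i j = if e i = j then 1 else 0

/-- The continuous full group `Γ_A`. -/
def fullGroup {N : ℕ} (A : Matrix (Fin N) (Fin N) ℕ) :
    Subgroup (↥(MarkovShift A) ≃ₜ ↥(MarkovShift A)) where
  carrier := {τ | ∃ k l : ↥(MarkovShift A) → ℕ, Continuous k ∧ Continuous l ∧
      ∀ x, (shift A)^[k x] (τ x) = (shift A)^[l x] x}
  one_mem' := ⟨fun _ => 0, fun _ => 0, continuous_const, continuous_const, fun _ => rfl⟩
  mul_mem' := by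
    rintro τ₁ τ₂ ⟨k, l, hk, hl, hrel⟩ ⟨k', l', hk', hl', hrel'⟩
    refine ⟨fun x => k (τ₂ x) + k' x, fun x => l (τ₂ x) + l' x,
      (hk.comp τ₂.continuous).add hk', (hl.comp τ₂.continuous).add hl', fun x => ?_⟩
    show (shift A)^[k (τ₂ x) + k' x] (τ₁ (τ₂ x)) = (shift A)^[l (τ₂ x) + l' x] x
    rw [add_comm (k (τ₂ x)) (k' x), Function.iterate_add_apply, hrel (τ₂ x), iter_swap,
      hrel' x, ← Function.iterate_add_apply]
  inv_mem' := by
    rintro τ ⟨k, l, hk, hl, hrel⟩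
    refine ⟨fun x => l (τ.symm x), fun x => k (τ.symm x),
      hl.comp τ.symm.continuous, hk.comp τ.symm.continuous, fun x => ?_⟩
    show (shift A)^[l (τ.symm x)] (τ.symm x) = (shift A)^[k (τ.symm x)] x
    have h0 := hrel (τ.symm x)
    rw [τ.apply_symm_apply] at h0
    exact h0.symm

/-- The subgroup `Γ_A^{AF}` of the continuous full group. -/
def afGroup {N : ℕ} (A : Matrix (Fin N) (Fin N) ℕ) :
    Subgroup (↥(MarkovShift A) ≃ₜ ↥(MarkovShift A)) where
  carrier := {τ | ∃ K : ℕ, ∀ x, (shift A)^[K] (τ x) = (shift A)^[K] x}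
  one_mem' := ⟨0, fun _ => rfl⟩
  mul_mem' := by
    rintro τ₁ τ₂ ⟨K, hK⟩ ⟨K', hK'⟩
    refine ⟨K' + K, fun x => ?_⟩
    show (shift A)^[K' + K] (τ₁ (τ₂ x)) = (shift A)^[K' + K] x
    rw [Function.iterate_add_apply, hK (τ₂ x), iter_swap, hK' x, iter_swap,
      ← Function.iterate_add_apply]
  inv_mem' := by
    rintro τ ⟨K, hK⟩
    refine ⟨K, fun x => ?_⟩
    show (shift A)^[K] (τ.symm x) = (shift A)^[K] x
    have h0 := hK (τ.symm x)
    rw [τ.apply_symm_apply] at h0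
    exact h0.symm

/-- `h`, together with `k₁, l₁, k₂, l₂`, witnesses a continuous orbit equivalence
between `(X_A, σ_A)` and `(X_B, σ_B)`. -/
def COEWitness {N M : ℕ} (A : Matrix (Fin N) (Fin N) ℕ) (B : Matrix (Fin M) (Fin M) ℕ)
    (h : ↥(MarkovShift A) ≃ₜ ↥(MarkovShift B)) (k₁ l₁ : ↥(MarkovShift A) → ℕ)
    (k₂ l₂ : ↥(MarkovShift B) → ℕ) : Prop :=
  Continuous k₁ ∧ Continuous l₁ ∧ Continuous k₂ ∧ Continuous l₂ ∧
  (∀ x, (shift B)^[k₁ x] (h (shift A x)) = (shift B)^[l₁ x] (h x)) ∧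
  (∀ y, (shift A)^[k₂ y] (h.symm (shift B y)) = (shift A)^[l₂ y] (h.symm y))

/-- `(X_A, σ_A)` and `(X_B, σ_B)` are continuously orbit equivalent. -/
def COE {N M : ℕ} (A : Matrix (Fin N) (Fin N) ℕ) (B : Matrix (Fin M) (Fin M) ℕ) : Prop :=
  ∃ h k₁ l₁ k₂ l₂, COEWitness A B h k₁ l₁ k₂ l₂

/-- The extra uniformity condition on a homeomorphism `h : X_A → X_B`:
elements of `Γ_A^{AF}` and `Γ_B^{AF}` are uniformly intertwined by `h`. -/
def UniformWitness {N M : ℕ} (A : Matrix (Fin N) (Fin N) ℕ) (B : Matrix (Fin M) (Fin M) ℕ)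
    (h : ↥(MarkovShift A) ≃ₜ ↥(MarkovShift B)) : Prop :=
  (∀ τ₁ ∈ afGroup A, ∃ K : ℕ, ∀ x, (shift B)^[K] (h (τ₁ x)) = (shift B)^[K] (h x)) ∧
  (∀ τ₂ ∈ afGroup B, ∃ K : ℕ, ∀ y, (shift A)^[K] (h.symm (τ₂ y)) = (shift A)^[K] (h.symm y))

/-- `(X_A, σ_A)` and `(X_B, σ_B)` are uniformly continuously orbit equivalent. -/
def UCOE {N M : ℕ} (A : Matrix (Fin N) (Fin N) ℕ) (B : Matrix (Fin M) (Fin M) ℕ) : Prop :=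
  ∃ h k₁ l₁ k₂ l₂, COEWitness A B h k₁ l₁ k₂ l₂ ∧ UniformWitness A B h

/-- `(X_A, σ_A)` and `(X_B, σ_B)` are uniformly orbit equivalent. -/
def UOE {N M : ℕ} (A : Matrix (Fin N) (Fin N) ℕ) (B : Matrix (Fin M) (Fin M) ℕ) : Prop :=
  ∃ h : ↥(MarkovShift A) ≃ₜ ↥(MarkovShift B), UniformWitness A B h

/-- `(X_A, σ_A)` and `(X_B, σ_B)` are eventually one-sided conjugate. -/
def EventuallyConjugate {N M : ℕ} (A : Matrix (Fin N) (Fin N) ℕ)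
    (B : Matrix (Fin M) (Fin M) ℕ) : Prop :=
  ∃ (h : ↥(MarkovShift A) ≃ₜ ↥(MarkovShift B)) (K₁ K₂ : ℕ),
    (∀ x, (shift B)^[K₁] (h (shift A x)) = (shift B)^[K₁ + 1] (h x)) ∧
    (∀ y, (shift A)^[K₂] (h.symm (shift B y)) = (shift A)^[K₂ + 1] (h.symm y))

/-- Conjugation of a self-homeomorphism of `X_A` by `h : X_A ≃ₜ X_B`,
i.e. `h ∘ τ ∘ h⁻¹`. -/
def conjHomeo {N M : ℕ} {A : Matrix (Fin N) (Fin N) ℕ} {B : Matrix (Fin M) (Fin M) ℕ}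
    (h : ↥(MarkovShift A) ≃ₜ ↥(MarkovShift B))
    (τ : ↥(MarkovShift A) ≃ₜ ↥(MarkovShift A)) : ↥(MarkovShift B) ≃ₜ ↥(MarkovShift B) :=
  (h.symm.trans τ).trans h

/-- A point `x ∈ X_A` is eventually periodic. -/
def EventuallyPeriodicPt {N : ℕ} (A : Matrix (Fin N) (Fin N) ℕ)
    (x : ↥(MarkovShift A)) : Prop :=
  ∃ r s : ℕ, s < r ∧ (shift A)^[r] x = (shift A)^[s] x

/-- `f^k(x) = Σ_{i=0}^{k-1} f(σ_A^i(x))`. -/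
def cocycleSum {N : ℕ} (A : Matrix (Fin N) (Fin N) ℕ) (f : ↥(MarkovShift A) → ℕ)
    (k : ℕ) (x : ↥(MarkovShift A)) : ℕ :=
  ∑ i ∈ Finset.range k, f ((shift A)^[i] x)

section Aux

private lemma shift_iter_coord {M : ℕ} (B : Matrix (Fin M) (Fin M) ℕ)
    (y : ↥(MarkovShift B)) (m i : ℕ) : ((shift B)^[m] y).1 i = y.1 (i + m) := by
  induction m generalizing y with
  | zero => rfl
  | succ m ih =>
    rw [Function.iterate_succ_apply, ih (shift B y)]
    exact rfl

private lemma evp_of_ne {M : ℕ} (B : Matrix (Fin M) (Fin M) ℕ) (y : ↥(MarkovShift B))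
    (p q : ℕ) (hpq : p ≠ q) (hiter : (shift B)^[p] y = (shift B)^[q] y) :
    EventuallyPeriodicPt B y := by
  rcases hpq.lt_or_gt with h1 | h1
  · exact ⟨q, p, h1, hiter.symm⟩
  · exact ⟨p, q, h1, hiter⟩

private lemma iterate_rel {N M : ℕ} (A : Matrix (Fin N) (Fin N) ℕ)
    (B : Matrix (Fin M) (Fin M) ℕ) (h : ↥(MarkovShift A) ≃ₜ ↥(MarkovShift B))
    (k₁ l₁ : ↥(MarkovShift A) → ℕ)
    (hrel : ∀ x, (shift B)^[k₁ x] (h (shift A x)) = (shift B)^[l₁ x] (h x))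
    (n : ℕ) (x : ↥(MarkovShift A)) :
    (shift B)^[cocycleSum A k₁ n x] (h ((shift A)^[n] x)) =
      (shift B)^[cocycleSum A l₁ n x] (h x) := by
  induction n with
  | zero => rfl
  | succ n ih =>
    have hs : ∀ f : ↥(MarkovShift A) → ℕ, cocycleSum A f (n + 1) x
        = cocycleSum A f n x + f ((shift A)^[n] x) := fun f => Finset.sum_range_succ _ _
    rw [hs, hs, Function.iterate_succ_apply' (shift A) n x, Function.iterate_add_apply,
      hrel ((shift A)^[n] x), iter_swap, ih, iter_swap, ← Function.iterate_add_apply]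

private lemma csum_diff {N : ℕ} (A : Matrix (Fin N) (Fin N) ℕ)
    (k₁ l₁ : ↥(MarkovShift A) → ℕ) (C₁ : ℤ) (hC₁ : ∀ x, (l₁ x : ℤ) - (k₁ x : ℤ) = C₁)
    (n : ℕ) (x : ↥(MarkovShift A)) :
    (cocycleSum A l₁ n x : ℤ) - (cocycleSum A k₁ n x : ℤ) = n * C₁ := by
  unfold cocycleSum
  push_cast
  rw [← Finset.sum_sub_distrib]
  rw [Finset.sum_congr rfl (fun i _ => hC₁ ((shift A)^[i] x)), Finset.sum_const,
    Finset.card_range, nsmul_eq_mul]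

private lemma path_of_pow_pos {M : ℕ} (B : Matrix (Fin M) (Fin M) ℕ)
    (hB01 : ∀ i j, B i j = 0 ∨ B i j = 1) :
    ∀ (n : ℕ) (w u : Fin M), 0 < (B ^ n) w u →
      ∃ f : ℕ → Fin M, f 0 = w ∧ f n = u ∧ ∀ i < n, B (f i) (f (i + 1)) = 1 := by
  intro n
  induction n with
  | zero =>
    intro w u hpos
    have hwu : w = u := by
      by_contra hne
      simp [Matrix.one_apply, hne] at hpos
    exact ⟨fun _ => w, rfl, hwu ▸ rfl, fun i hi => absurd hi (Nat.not_lt_zero i)⟩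
  | succ n ih =>
    intro w u hpos
    rw [pow_succ, Matrix.mul_apply] at hpos
    have hex : ∃ t, 0 < (B ^ n) w t * B t u := by
      by_contra hno
      push_neg at hno
      have hz : ∑ t, (B ^ n) w t * B t u = 0 :=
        Finset.sum_eq_zero fun t _ => Nat.le_zero.mp (hno t)
      omega
    obtain ⟨t, ht⟩ := hex
    have h1 : 0 < (B ^ n) w t := by
      rcases Nat.eq_zero_or_pos ((B ^ n) w t) with hz | hp
      · rw [hz, zero_mul] at ht; exact absurd ht (lt_irrefl 0)
      · exact hp
    have h2 : B t u = 1 := by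
      rcases hB01 t u with hz | ho
      · rw [hz, mul_zero] at ht; exact absurd ht (lt_irrefl 0)
      · exact ho
    obtain ⟨f, hf0, hfn, hfe⟩ := ih w t h1
    refine ⟨fun i => if i ≤ n then f i else u, by simpa using hf0, by simp, ?_⟩
    intro i hi
    by_cases hin : i < n
    · simp only [if_pos (le_of_lt hin), if_pos (Nat.succ_le_of_lt hin)]
      exact hfe i hin
    · have hieq : i = n := by omega
      subst hieq
      simp only [if_pos le_rfl, if_neg (by omega : ¬ i + 1 ≤ i), hfn]
      exact h2

end Aux

section Aux2

private lemma exists_branch {M : ℕ} (B : Matrix (Fin M) (Fin M) ℕ)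
    (hB : IsIrredNonPerm B) : ∃ v a b : Fin M, a ≠ b ∧ B v a = 1 ∧ B v b = 1 := by
  by_contra hno
  push_neg at hno
  have row : ∀ i : Fin M, ∃ j, B i j = 1 := by
    intro i
    obtain ⟨n, hn1, hpos⟩ := hB.irreducible i i
    obtain ⟨m, rfl⟩ : ∃ m, n = m + 1 := ⟨n - 1, by omega⟩
    rw [pow_succ', Matrix.mul_apply] at hpos
    have hex : ∃ t, 0 < B i t * (B ^ m) t i := by
      by_contra hc
      push_neg at hc
      have hz : ∑ t, B i t * (B ^ m) t i = 0 :=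
        Finset.sum_eq_zero fun t _ => Nat.le_zero.mp (hc t)
      omega
    obtain ⟨t, ht⟩ := hex
    refine ⟨t, ?_⟩
    rcases hB.zero_one i t with hz | ho
    · rw [hz, zero_mul] at ht; exact absurd ht (lt_irrefl 0)
    · exact ho
  classical
  choose e he using row
  have hsurj : Function.Surjective e := by
    intro u
    obtain ⟨n, hn1, hpos⟩ := hB.irreducible u u
    obtain ⟨f, hf0, hfn, hfe⟩ := path_of_pow_pos B hB.zero_one n u u hpos
    refine ⟨f (n - 1), ?_⟩
    have hedge : B (f (n - 1)) u = 1 := by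
      have := hfe (n - 1) (by omega)
      rwa [show n - 1 + 1 = n from by omega, hfn] at this
    by_contra hne
    exact hno (f (n - 1)) (e (f (n - 1))) u hne (he _) hedge
  have hinj : Function.Injective e := Finite.injective_iff_surjective.mpr hsurj
  refine hB.not_perm ⟨Equiv.ofBijective e ⟨hinj, hsurj⟩, fun i j => ?_⟩
  by_cases hij : e i = j
  · show B i j = if e i = j then 1 else 0
    simp only [Equiv.ofBijective_apply, hij, if_pos]
    rw [← hij]; exact he i
  · show B i j = if e i = j then 1 else 0
    simp only [Equiv.ofBijective_apply, hij, if_neg]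
    rcases hB.zero_one i j with hz | ho
    · exact hz
    · exact absurd (hno i (e i) j (by exact hij) (he i) ho).elim id

private lemma loops_exist {M : ℕ} (B : Matrix (Fin M) (Fin M) ℕ)
    (hB : IsIrredNonPerm B) :
    ∃ (v : Fin M) (q : Bool → ℕ → Fin M) (L : Bool → ℕ),
      (∀ t, 2 ≤ L t) ∧ (∀ t, q t 0 = v) ∧ (∀ t, q t (L t) = v) ∧
      (∀ t i, i < L t → B (q t i) (q t (i + 1)) = 1) ∧ q false 1 ≠ q true 1 := by
  obtain ⟨v, a, b, hab, hva, hvb⟩ := exists_branch B hB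
  obtain ⟨na, hna1, hpa⟩ := hB.irreducible a v
  obtain ⟨fa, hfa0, hfan, hfae⟩ := path_of_pow_pos B hB.zero_one na a v hpa
  obtain ⟨nb, hnb1, hpb⟩ := hB.irreducible b v
  obtain ⟨fb, hfb0, hfbn, hfbe⟩ := path_of_pow_pos B hB.zero_one nb b v hpb
  refine ⟨v, fun t i => if i = 0 then v else (if t then fb else fa) (i - 1),
    fun t => (if t then nb else na) + 1, ?_, ?_, ?_, ?_, ?_⟩
  · intro t; cases t <;> simp <;> omega
  · intro t; simp
  · intro t; cases t <;> simp [hfan, hfbn]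
  · intro t i hi
    by_cases hi0 : i = 0
    · subst hi0
      cases t <;> simp [hfa0, hfb0, hva, hvb]
    · have h1 : ¬ (i + 1 = 0) := by omega
      simp only [if_neg hi0, if_neg h1]
      cases t
      · simp only [if_neg, Bool.false_eq_true, ite_false]
        have := hfae (i - 1) (by simp at hi; omega)
        rwa [show i - 1 + 1 = i from by omega] at this
      · simp only [ite_true]
        have := hfbe (i - 1) (by simp at hi; omega)
        rwa [show i - 1 + 1 = i from by omega] at this
  · simpa [hfa0, hfb0] using hab

end Aux2

section Aux3

private def posF (L : Bool → ℕ) (s : ℕ → Bool) : ℕ → ℕ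
  | 0 => 0
  | j + 1 => posF L s j + L (s j)

private lemma posF_strictMono {L : Bool → ℕ} (hL : ∀ t, 1 ≤ L t) (s : ℕ → Bool) :
    StrictMono (posF L s) :=
  strictMono_nat_of_lt_succ fun j => by
    have := hL (s j); simp only [posF]; omega

private lemma exists_blk {L : Bool → ℕ} (hL : ∀ t, 1 ≤ L t) (s : ℕ → Bool) (n : ℕ) :
    ∃ j, n < posF L s (j + 1) :=
  ⟨n, lt_of_le_of_lt (posF_strictMono hL s).le_apply
    (posF_strictMono hL s (Nat.lt_succ_self n))⟩

private def blkF (L : Bool → ℕ) (hL : ∀ t, 1 ≤ L t) (s : ℕ → Bool) (n : ℕ) : ℕ :=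
  Nat.find (exists_blk hL s n)

private lemma blk_lt {L : Bool → ℕ} (hL : ∀ t, 1 ≤ L t) (s : ℕ → Bool) (n : ℕ) :
    n < posF L s (blkF L hL s n + 1) := Nat.find_spec (exists_blk hL s n)

private lemma blk_le {L : Bool → ℕ} (hL : ∀ t, 1 ≤ L t) (s : ℕ → Bool) (n : ℕ) :
    posF L s (blkF L hL s n) ≤ n := by
  rcases hb : blkF L hL s n with _ | j
  · simp [posF]
  · have hlt : j < blkF L hL s n := by omega
    have h2 : ¬ (n < posF L s (j + 1)) :=
      Nat.find_min (exists_blk hL s n) (by unfold blkF at hlt; exact hlt)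
    omega

private lemma blk_eq {L : Bool → ℕ} (hL : ∀ t, 1 ≤ L t) (s : ℕ → Bool) {n j : ℕ}
    (hj1 : posF L s j ≤ n) (hj2 : n < posF L s (j + 1)) : blkF L hL s n = j := by
  have h1 : blkF L hL s n ≤ j := Nat.find_min' (exists_blk hL s n) hj2
  by_contra hne
  have hlt : blkF L hL s n < j := by omega
  have hm : posF L s (blkF L hL s n + 1) ≤ posF L s j :=
    (posF_strictMono hL s).monotone hlt
  have := blk_lt hL s n
  omega

private def wordF {M : ℕ} (q : Bool → ℕ → Fin M) (L : Bool → ℕ) (hL : ∀ t, 1 ≤ L t)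
    (s : ℕ → Bool) (n : ℕ) : Fin M :=
  q (s (blkF L hL s n)) (n - posF L s (blkF L hL s n))

private lemma wordF_at {M : ℕ} (q : Bool → ℕ → Fin M) {L : Bool → ℕ} (hL : ∀ t, 1 ≤ L t)
    (s : ℕ → Bool) (j r : ℕ) (hr : r < L (s j)) :
    wordF q L hL s (posF L s j + r) = q (s j) r := by
  have hb : blkF L hL s (posF L s j + r) = j := by
    refine blk_eq hL s (Nat.le_add_right _ _) ?_
    show posF L s j + r < posF L s j + L (s j)
    omega
  simp [wordF, hb]

private lemma wordF_adm {M : ℕ} (B : Matrix (Fin M) (Fin M) ℕ) (v : Fin M)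
    (q : Bool → ℕ → Fin M) (L : Bool → ℕ) (hL : ∀ t, 1 ≤ L t)
    (hq0 : ∀ t, q t 0 = v) (hqL : ∀ t, q t (L t) = v)
    (hqe : ∀ t i, i < L t → B (q t i) (q t (i + 1)) = 1) (s : ℕ → Bool) (n : ℕ) :
    B (wordF q L hL s n) (wordF q L hL s (n + 1)) = 1 := by
  set j := blkF L hL s n with hj
  have h1 : posF L s j ≤ n := blk_le hL s n
  have h2 : n < posF L s (j + 1) := blk_lt hL s n
  have hps : posF L s (j + 1) = posF L s j + L (s j) := rfl
  set r := n - posF L s j with hrdef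
  have hn : n = posF L s j + r := by omega
  have hr : r < L (s j) := by omega
  have e0 : wordF q L hL s n = q (s j) r := by
    rw [hn]; exact wordF_at q hL s j r hr
  by_cases hc : r + 1 < L (s j)
  · have e1 : wordF q L hL s (n + 1) = q (s j) (r + 1) := by
      rw [show n + 1 = posF L s j + (r + 1) from by omega]
      exact wordF_at q hL s j (r + 1) hc
    rw [e0, e1]
    exact hqe (s j) r hr
  · have hre : r + 1 = L (s j) := by omega
    have e1 : wordF q L hL s (n + 1) = q (s (j + 1)) 0 := by
      rw [show n + 1 = posF L s (j + 1) + 0 from by omega]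
      exact wordF_at q hL s (j + 1) 0 (hL (s (j + 1)))
    rw [e0, e1, hq0, ← hqL (s j), ← hre]
    exact hqe (s j) r hr

private lemma wordF_zero {M : ℕ} (q : Bool → ℕ → Fin M) {L : Bool → ℕ}
    (hL : ∀ t, 1 ≤ L t) (s : ℕ → Bool) : wordF q L hL s 0 = q (s 0) 0 := by
  have := wordF_at q hL s 0 0 (hL (s 0))
  rwa [show posF L s 0 + 0 = 0 from rfl] at this

private lemma posF_congr {L : Bool → ℕ} {s s' : ℕ → Bool} {j : ℕ}
    (hag : ∀ i < j, s i = s' i) : ∀ k, k ≤ j → posF L s k = posF L s' k := by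
  intro k
  induction k with
  | zero => intro _; rfl
  | succ k ih =>
    intro hk
    simp only [posF]
    rw [ih (by omega), hag k (by omega)]

private lemma wordF_ne {M : ℕ} (q : Bool → ℕ → Fin M) (L : Bool → ℕ)
    (hL : ∀ t, 1 ≤ L t) (hL2 : ∀ t, 2 ≤ L t) (hd : q false 1 ≠ q true 1)
    {s s' : ℕ → Bool} (hss : s ≠ s') :
    ∃ k, wordF q L hL s k ≠ wordF q L hL s' k := by
  have hex : ∃ j, s j ≠ s' j := Function.ne_iff.mp hss
  classical
  have hj : s (Nat.find hex) ≠ s' (Nat.find hex) := Nat.find_spec hex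
  set j := Nat.find hex with hjdef
  have hag : ∀ i < j, s i = s' i := fun i hi => not_not.mp (Nat.find_min hex hi)
  have hpos : posF L s j = posF L s' j := posF_congr hag j le_rfl
  refine ⟨posF L s j + 1, ?_⟩
  have e1 : wordF q L hL s (posF L s j + 1) = q (s j) 1 :=
    wordF_at q hL s j 1 (hL2 (s j))
  have e2 : wordF q L hL s' (posF L s j + 1) = q (s' j) 1 := by
    rw [hpos]; exact wordF_at q hL s' j 1 (hL2 (s' j))
  rw [e1, e2]
  cases hb : s j <;> cases hb' : s' j
  · rw [hb, hb'] at hj; exact absurd rfl hj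
  · exact hd
  · exact hd.symm
  · rw [hb, hb'] at hj; exact absurd rfl hj

end Aux3

section Aux4

private lemma exists_family {M : ℕ} (B : Matrix (Fin M) (Fin M) ℕ) (v : Fin M)
    (q : Bool → ℕ → Fin M) (L : Bool → ℕ) (hL2 : ∀ t, 2 ≤ L t)
    (hq0 : ∀ t, q t 0 = v) (hqL : ∀ t, q t (L t) = v)
    (hqe : ∀ t i, i < L t → B (q t i) (q t (i + 1)) = 1) (hd : q false 1 ≠ q true 1)
    (T : ℕ) (pre : ℕ → Fin M) (hpre : ∀ i, i < T → B (pre i) (pre (i + 1)) = 1)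
    (hpT : pre T = v) :
    ∃ G : (ℕ → Bool) → ↥(MarkovShift B), Function.Injective G ∧
      ∀ s, ∀ i ≤ T, (G s).1 i = pre i := by
  have hL : ∀ t, 1 ≤ L t := fun t => le_trans one_le_two (hL2 t)
  have hw0 : ∀ s, wordF q L hL s 0 = v := fun s => by rw [wordF_zero q hL s, hq0]
  refine ⟨fun s => ⟨fun n => if n < T then pre n else wordF q L hL s (n - T), ?_⟩, ?_, ?_⟩
  · intro n
    by_cases h1 : n + 1 < T
    · have h0 : n < T := by omega
      simp only [if_pos h0, if_pos h1]
      exact hpre n h0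
    · by_cases h2 : n < T
      · have hT : n + 1 = T := by omega
        simp only [if_pos h2, if_neg h1]
        rw [show n + 1 - T = 0 from by omega, hw0 s, ← hpT, ← hT]
        exact hpre n h2
      · simp only [if_neg h2, if_neg h1]
        rw [show n + 1 - T = (n - T) + 1 from by omega]
        exact wordF_adm B v q L hL hq0 hqL hqe s (n - T)
  · intro s s' hG
    by_contra hss
    obtain ⟨k, hk⟩ := wordF_ne q L hL hL2 hd hss
    apply hk
    have hcoord := congrFun (congrArg Subtype.val hG) (T + k)
    simpa [show ¬ (T + k < T) from by omega, Nat.add_sub_cancel_left] using hcoord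
  · intro s i hi
    by_cases hiT : i < T
    · simp [hiT]
    · have hieq : i = T := by omega
      subst hieq
      simp only [if_neg hiT, Nat.sub_self, hw0 s, hpT]

private lemma evp_countable {M : ℕ} (B : Matrix (Fin M) (Fin M) ℕ) :
    {y : ↥(MarkovShift B) | EventuallyPeriodicPt B y}.Countable := by
  have hsub : {y : ↥(MarkovShift B) | EventuallyPeriodicPt B y} ⊆
      ⋃ p : ℕ × ℕ, {y : ↥(MarkovShift B) |
        (shift B)^[p.1] y = (shift B)^[p.2] y ∧ p.2 < p.1} := by
    rintro y ⟨r, s, h1, h2⟩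
    exact Set.mem_iUnion.mpr ⟨(r, s), h2, h1⟩
  refine Set.Countable.mono hsub (Set.countable_iUnion fun p => ?_)
  rcases p with ⟨r, s⟩
  by_cases hrs : s < r
  · have hfin : Finite ↥{y : ↥(MarkovShift B) |
        (shift B)^[r] y = (shift B)^[s] y ∧ s < r} := by
      apply Finite.of_injective
        (fun y : ↥{y : ↥(MarkovShift B) | (shift B)^[r] y = (shift B)^[s] y ∧ s < r} =>
          (fun i : Fin r => (y : ↥(MarkovShift B)).1 i))
      intro x y hxy
      refine Subtype.ext (Subtype.ext (funext fun m => ?_))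
      induction m using Nat.strong_induction_on with
      | _ m ih =>
        by_cases hm : m < r
        · exact congrFun hxy ⟨m, hm⟩
        · have hx : (x : ↥(MarkovShift B)).1 m = (x : ↥(MarkovShift B)).1 (m - r + s) := by
            have h0 : ((shift B)^[r] (x : ↥(MarkovShift B))).1 (m - r)
                = ((shift B)^[s] (x : ↥(MarkovShift B))).1 (m - r) := by rw [x.2.1]
            rw [shift_iter_coord, shift_iter_coord,
              show m - r + r = m from by omega] at h0
            exact h0
          have hy : (y : ↥(MarkovShift B)).1 m = (y : ↥(MarkovShift B)).1 (m - r + s) := by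
            have h0 : ((shift B)^[r] (y : ↥(MarkovShift B))).1 (m - r)
                = ((shift B)^[s] (y : ↥(MarkovShift B))).1 (m - r) := by rw [y.2.1]
            rw [shift_iter_coord, shift_iter_coord,
              show m - r + r = m from by omega] at h0
            exact h0
          rw [hx, hy]
          exact ih (m - r + s) (by omega)
    exact (Set.finite_coe_iff.mp hfin).countable
  · have he : {y : ↥(MarkovShift B) |
        (shift B)^[r] y = (shift B)^[s] y ∧ s < r} = ∅ :=
      Set.eq_empty_of_forall_notMem fun y hy => hrs hy.2
    rw [he]
    exact Set.countable_empty

private lemma not_countable_bool : ¬ Countable (ℕ → Bool) := by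
  intro hcount
  obtain ⟨f, hf⟩ := hcount.exists_injective_nat
  classical
  have hg : Function.Injective (fun (S : Set ℕ) (n : ℕ) => decide (n ∈ S)) := by
    intro S T hST
    ext n
    have h2 := congrFun hST n
    simpa [decide_eq_decide] using h2
  exact Function.cantor_injective _ (hf.comp hg)

private lemma cylinder_const {M : ℕ} (B : Matrix (Fin M) (Fin M) ℕ)
    (g : ↥(MarkovShift B) → ℕ) (hg : Continuous g) (y : ↥(MarkovShift B)) :
    ∃ n, ∀ z : ↥(MarkovShift B), (∀ i ≤ n, z.1 i = y.1 i) → g z = g y := by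
  have hopen : IsOpen (g ⁻¹' {g y}) := (isOpen_discrete _).preimage hg
  rw [isOpen_induced_iff] at hopen
  obtain ⟨U, hU, hUeq⟩ := hopen
  have hyU : y.1 ∈ U := by
    have hmem : y ∈ g ⁻¹' {g y} := rfl
    rw [← hUeq] at hmem
    exact hmem
  obtain ⟨I, u, hIu, hsub⟩ := (isOpen_pi_iff.mp hU) y.1 hyU
  refine ⟨I.sup id, fun z hz => ?_⟩
  have hzU : z.1 ∈ U := by
    apply hsub
    intro i hi
    have hi' : i ∈ I := hi
    rw [hz i (Finset.le_sup (f := id) hi')]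
    exact (hIu i hi').2
  have hmem : z ∈ g ⁻¹' {g y} := by
    rw [← hUeq]
    exact hzU
  exact hmem

end Aux4

section Aux5

private lemma aperiodic_of_family {M : ℕ} (B : Matrix (Fin M) (Fin M) ℕ)
    (G : (ℕ → Bool) → ↥(MarkovShift B)) (hGinj : Function.Injective G) :
    ∃ s, ¬ EventuallyPeriodicPt B (G s) := by
  by_contra hcon
  push_neg at hcon
  have hc : Countable (ℕ → Bool) := by
    haveI : Countable ↥{y : ↥(MarkovShift B) | EventuallyPeriodicPt B y} :=
      Set.countable_coe_iff.mpr (evp_countable B)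
    have hinj : Function.Injective
        (fun s => (⟨G s, hcon s⟩ :
          ↥{y : ↥(MarkovShift B) | EventuallyPeriodicPt B y})) := by
      intro s s' hss
      exact hGinj (congrArg Subtype.val hss)
    exact hinj.countable
  exact not_countable_bool hc

private lemma aperiodic_in_cylinder {M : ℕ} (B : Matrix (Fin M) (Fin M) ℕ)
    (hB : IsIrredNonPerm B) (y : ↥(MarkovShift B)) (n : ℕ) :
    ∃ z : ↥(MarkovShift B), (∀ i ≤ n, z.1 i = y.1 i) ∧
      ¬ EventuallyPeriodicPt B z := by
  obtain ⟨v, q, L, hL2, hq0, hqL, hqe, hd⟩ := loops_exist B hB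
  obtain ⟨m, hm1, hmpos⟩ := hB.irreducible (y.1 n) v
  obtain ⟨f, hf0, hfm, hfe⟩ := path_of_pow_pos B hB.zero_one m (y.1 n) v hmpos
  set pre : ℕ → Fin M := fun i => if i ≤ n then y.1 i else f (i - n) with hpre_def
  have hpre : ∀ i, i < n + m → B (pre i) (pre (i + 1)) = 1 := by
    intro i hi
    by_cases h1 : i + 1 ≤ n
    · simp only [hpre_def, if_pos (by omega : i ≤ n), if_pos h1]
      exact y.2 i
    · by_cases h2 : i ≤ n
      · have hin : i = n := by omega
        simp only [hpre_def, if_pos h2, if_neg h1]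
        rw [hin, show n + 1 - n = 1 from by omega, ← hf0]
        exact hfe 0 (by omega)
      · simp only [hpre_def, if_neg h2, if_neg h1]
        rw [show i + 1 - n = (i - n) + 1 from by omega]
        exact hfe (i - n) (by omega)
  have hpT : pre (n + m) = v := by
    simp only [hpre_def, if_neg (show ¬ n + m ≤ n from by omega)]
    rw [show n + m - n = m from by omega]
    exact hfm
  obtain ⟨G, hGinj, hGag⟩ := exists_family B v q L hL2 hq0 hqL hqe hd (n + m) pre hpre hpT
  obtain ⟨s, hs⟩ := aperiodic_of_family B G hGinj
  refine ⟨G s, fun i hi => ?_, hs⟩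
  rw [hGag s i (by omega)]
  simp only [hpre_def, if_pos hi]

private lemma exists_aperiodic {M : ℕ} (B : Matrix (Fin M) (Fin M) ℕ)
    (hB : IsIrredNonPerm B) :
    ∃ z : ↥(MarkovShift B), ¬ EventuallyPeriodicPt B z := by
  obtain ⟨v, q, L, hL2, hq0, hqL, hqe, hd⟩ := loops_exist B hB
  obtain ⟨G, hGinj, _⟩ := exists_family B v q L hL2 hq0 hqL hqe hd 0 (fun _ => v)
    (fun i hi => absurd hi (Nat.not_lt_zero i)) rfl
  obtain ⟨s, hs⟩ := aperiodic_of_family B G hGinj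
  exact ⟨G s, hs⟩

end Aux5

/-- if the cocycle function `c₁ = l₁ - k₁` is constant with value
`C₁`, then `c₂ = l₂ - k₂` is also constant, with value `C₂`, and `C₁ · C₂ = 1`. -/
theorem cocycle_const_implies_other_const {N M : ℕ}
    (A : Matrix (Fin N) (Fin N) ℕ) (B : Matrix (Fin M) (Fin M) ℕ)
    (hA : IsIrredNonPerm A) (hB : IsIrredNonPerm B)
    (h : ↥(MarkovShift A) ≃ₜ ↥(MarkovShift B))
    (k₁ l₁ : ↥(MarkovShift A) → ℕ) (k₂ l₂ : ↥(MarkovShift B) → ℕ)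
    (hw : COEWitness A B h k₁ l₁ k₂ l₂)
    (C₁ : ℤ) (hC₁ : ∀ x, (l₁ x : ℤ) - (k₁ x : ℤ) = C₁) :
    ∃ C₂ : ℤ, (∀ y, (l₂ y : ℤ) - (k₂ y : ℤ) = C₂) ∧ C₁ * C₂ = 1 := by
  obtain ⟨hk1, hl1, hk2, hl2, hrel1, hrel2⟩ := hw
  -- the key identity at non-eventually-periodic points
  have key : ∀ y : ↥(MarkovShift B), ¬ EventuallyPeriodicPt B y →
      C₁ * ((l₂ y : ℤ) - (k₂ y : ℤ)) = 1 := by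
    intro y hy
    set x : ↥(MarkovShift A) := h.symm y with hxdef
    set x' : ↥(MarkovShift A) := h.symm (shift B y) with hx'def
    have hr2 : (shift A)^[k₂ y] x' = (shift A)^[l₂ y] x := hrel2 y
    have E1 := iterate_rel A B h k₁ l₁ hrel1 (k₂ y) x'
    have E2 := iterate_rel A B h k₁ l₁ hrel1 (l₂ y) x
    rw [hr2] at E1
    have hhx' : h x' = shift B y := h.apply_symm_apply _
    have hhx : h x = y := h.apply_symm_apply _
    rw [hhx'] at E1
    rw [hhx] at E2
    set aa := cocycleSum A k₁ (k₂ y) x' with haa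
    set bb := cocycleSum A l₁ (k₂ y) x' with hbb
    set aa' := cocycleSum A k₁ (l₂ y) x with haa'
    set bb' := cocycleSum A l₁ (l₂ y) x with hbb'
    -- E1 : σB^[aa] (h (σA^[l₂ y] x)) = σB^[bb] (σB y)
    -- E2 : σB^[aa'] (h (σA^[l₂ y] x)) = σB^[bb'] y
    have comb : (shift B)^[aa' + (bb + 1)] y = (shift B)^[aa + bb'] y := by
      calc (shift B)^[aa' + (bb + 1)] y
          = (shift B)^[aa'] ((shift B)^[bb + 1] y) := Function.iterate_add_apply _ _ _ _
        _ = (shift B)^[aa'] ((shift B)^[bb] (shift B y)) := by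
            rw [Function.iterate_succ_apply]
        _ = (shift B)^[aa'] ((shift B)^[aa] (h ((shift A)^[l₂ y] x))) := by rw [E1]
        _ = (shift B)^[aa] ((shift B)^[aa'] (h ((shift A)^[l₂ y] x))) := iter_swap _ _ _ _
        _ = (shift B)^[aa] ((shift B)^[bb'] y) := by rw [E2]
        _ = (shift B)^[aa + bb'] y := (Function.iterate_add_apply _ _ _ _).symm
    have heq : aa' + (bb + 1) = aa + bb' := by
      by_contra hne
      exact hy (evp_of_ne B y _ _ hne comb)
    have d1 : (bb : ℤ) - (aa : ℤ) = (k₂ y : ℤ) * C₁ := csum_diff A k₁ l₁ C₁ hC₁ (k₂ y) x'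
    have d2 : (bb' : ℤ) - (aa' : ℤ) = (l₂ y : ℤ) * C₁ := csum_diff A k₁ l₁ C₁ hC₁ (l₂ y) x
    have hz : (aa' : ℤ) + ((bb : ℤ) + 1) = (aa : ℤ) + (bb' : ℤ) := by exact_mod_cast heq
    linear_combination d1 - d2 - hz
  -- a non-eventually-periodic point
  obtain ⟨y₀, hy₀⟩ := exists_aperiodic B hB
  refine ⟨(l₂ y₀ : ℤ) - (k₂ y₀ : ℤ), ?_, key y₀ hy₀⟩
  have hC₁ne : C₁ ≠ 0 := by
    intro hzero
    have := key y₀ hy₀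
    rw [hzero, zero_mul] at this
    exact absurd this (by norm_num)
  intro y
  obtain ⟨n1, hn1⟩ := cylinder_const B k₂ hk2 y
  obtain ⟨n2, hn2⟩ := cylinder_const B l₂ hl2 y
  obtain ⟨z, hz1, hz2⟩ := aperiodic_in_cylinder B hB y (max n1 n2)
  have e1 : k₂ z = k₂ y := hn1 z fun i hi => hz1 i (le_trans hi (le_max_left _ _))
  have e2 : l₂ z = l₂ y := hn2 z fun i hi => hz1 i (le_trans hi (le_max_right _ _))
  have hkz := key z hz2
  have hky := key y₀ hy₀
  rw [e1, e2] at hkz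
  have := hkz.trans hky.symm
  exact mul_left_cancel₀ hC₁ne this
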